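/- Let Y ∼ (1/2)N(−θ*,1) + (1/2)N(θ*,1) with θ* ≥ 0 and f(θ) = E[Y·tanh(θY)]. Then f is concave on [0,∞) and convex on (−∞,0]. -/

import Mathlib

open MeasureTheory ProbabilityTheory
open scoped ENNReal

/-- The symmetric two-component Gaussian mixture `(1/2)N(−s,1) + (1/2)N(s,1)`. -/
noncomputable def mixG (s : ℝ) : Measure ℝ :=
  (1 / 2 : ℝ≥0∞) • gaussianReal (-s) 1 + (1 / 2 : ℝ≥0∞) • gaussianReal s 1

/-- The population EM map `f(θ) = E[Y·tanh(θY)]`, `Y ∼ mixG s`. -/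
noncomputable def emMap (s θ : ℝ) : ℝ := ∫ y, y * Real.tanh (θ * y) ∂(mixG s)

lemma tanh_hasDerivAt (x : ℝ) : HasDerivAt Real.tanh (1 / Real.cosh x ^ 2) x := by
  have h := (Real.hasDerivAt_sinh x).div (Real.hasDerivAt_cosh x) (Real.cosh_pos x).ne'
  have he : (Real.cosh x * Real.cosh x - Real.sinh x * Real.sinh x) / Real.cosh x ^ 2
      = 1 / Real.cosh x ^ 2 := by
    rw [show Real.cosh x * Real.cosh x - Real.sinh x * Real.sinh x
        = Real.cosh x ^ 2 - Real.sinh x ^ 2 by ring, Real.cosh_sq_sub_sinh_sq]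
  rw [he] at h
  have : Real.tanh = fun x => Real.sinh x / Real.cosh x :=
    funext Real.tanh_eq_sinh_div_cosh
  rw [this]
  exact h

lemma abs_tanh_le_one (x : ℝ) : |Real.tanh x| ≤ 1 := by
  rw [Real.tanh_eq_sinh_div_cosh, abs_div, abs_of_pos (Real.cosh_pos x),
    div_le_one (Real.cosh_pos x)]
  have h := Real.cosh_sq_sub_sinh_sq x
  nlinarith [abs_nonneg (Real.sinh x), sq_abs (Real.sinh x), Real.cosh_pos x]

lemma gy_hasDerivAt (y θ : ℝ) :
    HasDerivAt (fun θ => y * Real.tanh (θ * y)) (y ^ 2 / Real.cosh (θ * y) ^ 2) θ := by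
  have h1 : HasDerivAt (fun θ : ℝ => θ * y) y θ := hasDerivAt_mul_const y
  have h2 := (tanh_hasDerivAt (θ * y)).comp θ h1
  have h3 := h2.const_mul y
  refine h3.congr_deriv ?_
  ring

lemma gy_deriv2 (y θ : ℝ) :
    HasDerivAt (fun θ => y ^ 2 / Real.cosh (θ * y) ^ 2)
      (-(2 * (y ^ 2 * (y * Real.sinh (θ * y))) * Real.cosh (θ * y)) / (Real.cosh (θ * y) ^ 2) ^ 2)
      θ := by
  have h1 : HasDerivAt (fun θ : ℝ => θ * y) y θ := hasDerivAt_mul_const y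
  have hc : HasDerivAt (fun θ => Real.cosh (θ * y)) (Real.sinh (θ * y) * y) θ :=
    by have := (Real.hasDerivAt_cosh (θ * y)).comp θ h1; exact this
  have hden : HasDerivAt (fun θ => Real.cosh (θ * y) ^ 2)
      (2 * Real.cosh (θ * y) ^ 1 * (Real.sinh (θ * y) * y)) θ := hc.pow 2
  have h := (hasDerivAt_const θ (y ^ 2)).div hden
    (by positivity : Real.cosh (θ * y) ^ 2 ≠ 0)
  refine h.congr_deriv ?_
  ring

lemma sinh_nonneg' {x : ℝ} (hx : 0 ≤ x) : 0 ≤ Real.sinh x := by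
  have := Real.sinh_le_sinh.2 hx
  rwa [Real.sinh_zero] at this

lemma sinh_nonpos' {x : ℝ} (hx : x ≤ 0) : Real.sinh x ≤ 0 := by
  have := Real.sinh_le_sinh.2 hx
  rwa [Real.sinh_zero] at this

lemma continuous_tanh' : Continuous Real.tanh := by
  have : Real.tanh = fun x => Real.sinh x / Real.cosh x := funext Real.tanh_eq_sinh_div_cosh
  rw [this]
  exact Real.continuous_sinh.div Real.continuous_cosh fun x => (Real.cosh_pos x).ne'

lemma ysinh_nonneg {y θ : ℝ} (hθ : 0 ≤ θ) : 0 ≤ y * Real.sinh (θ * y) := by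
  rcases le_total 0 y with hy | hy
  · exact mul_nonneg hy (sinh_nonneg' (mul_nonneg hθ hy))
  · have h := sinh_nonpos' (mul_nonpos_of_nonneg_of_nonpos hθ hy)
    nlinarith

lemma ysinh_nonpos {y θ : ℝ} (hθ : θ ≤ 0) : y * Real.sinh (θ * y) ≤ 0 := by
  have := ysinh_nonneg (y := y) (θ := -θ) (by linarith)
  simp only [neg_mul, Real.sinh_neg, mul_neg] at this
  linarith

lemma gy_cont (y : ℝ) : Continuous (fun θ => y * Real.tanh (θ * y)) :=
  continuous_const.mul (continuous_tanh'.comp (continuous_id.mul continuous_const))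

lemma gy_concave (y : ℝ) : ConcaveOn ℝ (Set.Ici (0:ℝ)) (fun θ => y * Real.tanh (θ * y)) := by
  refine concaveOn_of_hasDerivWithinAt2_nonpos (convex_Ici 0) (gy_cont y).continuousOn
    (f' := fun θ => y ^ 2 / Real.cosh (θ * y) ^ 2)
    (fun x _ => (gy_hasDerivAt y x).hasDerivWithinAt)
    (fun x _ => (gy_deriv2 y x).hasDerivWithinAt) ?_
  intro x hx
  rw [interior_Ici] at hx
  apply div_nonpos_of_nonpos_of_nonneg _ (by positivity)
  have h1 := ysinh_nonneg (y := y) (le_of_lt hx)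
  have h2 := (Real.cosh_pos (x * y)).le
  nlinarith [mul_nonneg (mul_nonneg (sq_nonneg y) h1) h2]

lemma gy_convex (y : ℝ) : ConvexOn ℝ (Set.Iic (0:ℝ)) (fun θ => y * Real.tanh (θ * y)) := by
  refine convexOn_of_hasDerivWithinAt2_nonneg (convex_Iic 0) (gy_cont y).continuousOn
    (f' := fun θ => y ^ 2 / Real.cosh (θ * y) ^ 2)
    (fun x _ => (gy_hasDerivAt y x).hasDerivWithinAt)
    (fun x _ => (gy_deriv2 y x).hasDerivWithinAt) ?_
  intro x hx
  rw [interior_Iic] at hx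
  apply div_nonneg _ (by positivity)
  have h1 := ysinh_nonpos (y := y) (le_of_lt hx)
  have h2 := (Real.cosh_pos (x * y)).le
  nlinarith [mul_nonneg (mul_nonneg (sq_nonneg y) (neg_nonneg.2 h1)) h2]

lemma integrable_id_gauss (m : ℝ) : Integrable id (gaussianReal m 1) := by
  rw [gaussianReal_of_var_ne_zero m one_ne_zero]
  rw [integrable_withDensity_iff (measurable_gaussianPDF m 1)
    (Filter.Eventually.of_forall fun x => ENNReal.ofReal_lt_top)]
  have key : Integrable (fun x : ℝ => x * gaussianPDFReal m 1 x) := by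
    have hb : (0:ℝ) < 1/2 := by norm_num
    have h1 : Integrable (fun x : ℝ => (x + m) * Real.exp (-(1/2) * x ^ 2)) := by
      have := (integrable_mul_exp_neg_mul_sq hb).add
        ((integrable_exp_neg_mul_sq hb).const_mul m)
      exact this.congr (Filter.Eventually.of_forall fun x => by simp; ring)
    have h2 := h1.comp_sub_right m
    have h3 := h2.const_mul (Real.sqrt (2 * Real.pi))⁻¹
    refine h3.congr (Filter.Eventually.of_forall fun x => ?_)
    simp only [gaussianPDFReal, NNReal.coe_one, mul_one]
    rw [Real.exp_eq_exp.2 (by ring : -(1/2) * (x - m) ^ 2 = -(x - m) ^ 2 / 2)]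
    ring
  exact key.congr (Filter.Eventually.of_forall fun x => by
    simp [gaussianPDF, ENNReal.toReal_ofReal (gaussianPDFReal_nonneg m 1 x)])

lemma gy_cont_y (θ : ℝ) : Continuous (fun y : ℝ => y * Real.tanh (θ * y)) :=
  continuous_id.mul (continuous_tanh'.comp (continuous_const.mul continuous_id))

lemma integrable_gy (s θ : ℝ) : Integrable (fun y => y * Real.tanh (θ * y)) (mixG s) := by
  have key : ∀ m : ℝ, Integrable (fun y => y * Real.tanh (θ * y)) (gaussianReal m 1) := by
    intro m
    refine (integrable_id_gauss m).mono ((gy_cont_y θ).aestronglyMeasurable) ?_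
    · exact Filter.Eventually.of_forall fun y => by
        rw [Real.norm_eq_abs, Real.norm_eq_abs, abs_mul, id]
        calc |y| * |Real.tanh (θ * y)| ≤ |y| * 1 :=
          mul_le_mul_of_nonneg_left (abs_tanh_le_one _) (abs_nonneg y)
        _ = |y| := mul_one _
  rw [mixG, integrable_add_measure,
    integrable_smul_measure (by norm_num) (by norm_num),
    integrable_smul_measure (by norm_num) (by norm_num)]
  exact ⟨key _, key _⟩

/-- `f` is concave on `[0,∞)` and convex on `(−∞,0]`. -/
theorem stmt_4 (s : ℝ) (hs : 0 ≤ s) :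
    ConcaveOn ℝ (Set.Ici (0 : ℝ)) (emMap s) ∧
    ConvexOn ℝ (Set.Iic (0 : ℝ)) (emMap s) := by
  constructor
  · refine ⟨convex_Ici 0, fun x hx z hz a b ha hb hab => ?_⟩
    have hpt : ∀ y : ℝ, a * (y * Real.tanh (x * y)) + b * (y * Real.tanh (z * y))
        ≤ y * Real.tanh ((a * x + b * z) * y) := fun y =>
      (gy_concave y).2 hx hz ha hb hab
    have hmono : ∫ y, (a * (y * Real.tanh (x * y)) + b * (y * Real.tanh (z * y))) ∂(mixG s)
        ≤ ∫ y, y * Real.tanh ((a * x + b * z) * y) ∂(mixG s) :=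
      integral_mono (((integrable_gy s x).const_mul a).add ((integrable_gy s z).const_mul b))
        (integrable_gy s _) hpt
    have heq : ∫ y, (a * (y * Real.tanh (x * y)) + b * (y * Real.tanh (z * y))) ∂(mixG s)
        = a * emMap s x + b * emMap s z := by
      rw [integral_add ((integrable_gy s x).const_mul a) ((integrable_gy s z).const_mul b),
        integral_const_mul, integral_const_mul]
      rfl
    simpa [emMap, smul_eq_mul, heq] using hmono
  · refine ⟨convex_Iic 0, fun x hx z hz a b ha hb hab => ?_⟩
    have hpt : ∀ y : ℝ, y * Real.tanh ((a * x + b * z) * y)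
        ≤ a * (y * Real.tanh (x * y)) + b * (y * Real.tanh (z * y)) := fun y =>
      (gy_convex y).2 hx hz ha hb hab
    have hmono : ∫ y, y * Real.tanh ((a * x + b * z) * y) ∂(mixG s)
        ≤ ∫ y, (a * (y * Real.tanh (x * y)) + b * (y * Real.tanh (z * y))) ∂(mixG s) :=
      integral_mono (integrable_gy s _)
        (((integrable_gy s x).const_mul a).add ((integrable_gy s z).const_mul b)) hpt
    have heq : ∫ y, (a * (y * Real.tanh (x * y)) + b * (y * Real.tanh (z * y))) ∂(mixG s)
        = a * emMap s x + b * emMap s z := by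
      rw [integral_add ((integrable_gy s x).const_mul a) ((integrable_gy s z).const_mul b),
        integral_const_mul, integral_const_mul]
      rfl
    simpa [emMap, smul_eq_mul, heq] using hmono
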